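/- (Bonferroni partial conjunction p-value validity) Let p_1,...,p_K ∈ [0,1] be p-values such that at least K − u + 1 of them correspond to true nulls and each true-null p-value is super-uniform (P(p_k ≤ α) ≤ α). Then the statistic p^{u/K} := (K − u + 1) · p_{(u)}, where p_{(u)} is the u-th smallest p-value, satisfies P(p^{u/K} ≤ α) ≤ α for all α ∈ [0,1], regardless of the dependence among the p-values. -/

import Mathlib

open MeasureTheory

/-- The `u`-th smallest value (1-indexed) among `pv 1 ω, …, pv K ω`. -/
noncomputable def orderStat {Ω : Type*} {K : ℕ} (pv : Fin K → Ω → ℝ) (u : ℕ) (ω : Ω) : ℝ :=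
  ((Finset.univ.val.map (fun k : Fin K => pv k ω)).sort (· ≤ ·)).getD (u - 1) 0

lemma exists_le_orderStat {Ω : Type*} {K u : ℕ} (hu1 : 1 ≤ u) (huK : u ≤ K)
    (pv : Fin K → Ω → ℝ) (S : Finset (Fin K)) (hS : S.card = K - u + 1) (ω : Ω) :
    ∃ k ∈ S, pv k ω ≤ orderStat pv u ω := by
  classical
  set f : Fin K → ℝ := fun k => pv k ω with hf
  set M : Multiset ℝ := Finset.univ.val.map f with hM
  set L : List ℝ := M.sort (· ≤ ·) with hL
  have hlen : L.length = K := by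
    simp [hL, hM, Multiset.length_sort]
  have hu' : u - 1 < L.length := by omega
  set t : ℝ := orderStat pv u ω with htdef
  have ht : t = L[u-1]'hu' := by
    rw [htdef]
    show L.getD (u-1) 0 = _
    exact List.getD_eq_getElem L 0 hu'
  have hsorted : L.Pairwise (· ≤ ·) := Multiset.pairwise_sort _ _
  -- every element of L.take u is ≤ t
  have htake : ∀ x ∈ L.take u, x ≤ t := by
    intro x hx
    obtain ⟨i, hi, hix⟩ := List.mem_iff_getElem.mp hx
    have hiu : i < u := lt_of_lt_of_le hi (by simp [List.length_take])
    have hiL : i < L.length := by omega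
    have : L[i] ≤ L[u-1] := by
      rcases eq_or_lt_of_le (by omega : i ≤ u - 1) with h | h
      · subst h; exact le_refl _
      · exact List.Pairwise.rel_get_of_lt hsorted h
    rw [← hix, List.getElem_take]
    rw [ht]; exact this
  have hcount : u ≤ L.countP (fun x => decide (x ≤ t)) := by
    have h1 : (L.take u).countP (fun x => decide (x ≤ t)) = (L.take u).length := by
      apply List.countP_eq_length.mpr
      intro x hx; simpa using htake x hx
    have h2 : (L.take u).length = u := by simp [List.length_take]; omega
    have h3 := List.Sublist.countP_le (p := fun x => decide (x ≤ t)) (List.take_sublist u L)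
    omega
  have hgt : L.countP (fun x => decide (t < x)) ≤ K - u := by
    have hsplit := List.length_eq_countP_add_countP (fun x => decide (x ≤ t)) (l := L)
    have heq : L.countP (fun x => decide (t < x))
        = L.countP (fun a => decide ¬(decide (a ≤ t) = true)) := by
      apply List.countP_congr
      intro x _
      simp [not_le]
    omega
  -- transfer to multisets
  have hMgt : M.countP (fun x => t < x) ≤ K - u := by
    have : M = (L : Multiset ℝ) := by rw [hL, Multiset.sort_eq]
    rw [this]
    simpa [Multiset.coe_countP] using hgt
  by_contra hcon
  push_neg at hcon
  have hall : ∀ x ∈ S.val.map f, t < x := by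
    intro x hx
    obtain ⟨k, hk, rfl⟩ := Multiset.mem_map.mp hx
    exact hcon k hk
  have hle : S.val.map f ≤ M := by
    apply Multiset.map_le_map
    exact Finset.val_le_iff.mpr (Finset.subset_univ S)
  have h1 : (S.val.map f).countP (fun x => t < x) = (S.val.map f).card :=
    Multiset.countP_eq_card.mpr hall
  have h2 : (S.val.map f).countP (fun x => t < x) ≤ M.countP (fun x => t < x) :=
    Multiset.countP_le_of_le _ hle
  have h3 : (S.val.map f).card = K - u + 1 := by simp [hS]
  omega

/-- Bonferroni partial conjunction p-value validity: if at least `K − u + 1`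
of the p-values come from true nulls, each super-uniform, then
`(K − u + 1)·p_{(u)}` is a valid p-value, under arbitrary dependence. -/
theorem bonferroni_partial_conjunction_valid {Ω : Type*} [MeasurableSpace Ω]
    (μ : Measure Ω) [IsProbabilityMeasure μ] (K u : ℕ) (hu1 : 1 ≤ u) (huK : u ≤ K)
    (pv : Fin K → Ω → ℝ) (T : Finset (Fin K)) (hT : K - u + 1 ≤ T.card)
    (hrange : ∀ k ω, pv k ω ∈ Set.Icc (0 : ℝ) 1)
    (hsup : ∀ k ∈ T, ∀ α ∈ Set.Icc (0 : ℝ) 1,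
      μ {ω | pv k ω ≤ α} ≤ ENNReal.ofReal α) :
    ∀ α ∈ Set.Icc (0 : ℝ) 1,
      μ {ω | ((K - u + 1 : ℕ) : ℝ) * orderStat pv u ω ≤ α} ≤ ENNReal.ofReal α := by
  classical
  intro α hα
  obtain ⟨hα0, hα1⟩ := hα
  set m : ℕ := K - u + 1 with hm
  have hm0 : (0:ℝ) < m := by positivity
  obtain ⟨S, hST, hScard⟩ := Finset.exists_subset_card_eq hT
  have hβ : α / m ∈ Set.Icc (0:ℝ) 1 := by
    constructor
    · positivity
    · rw [div_le_one hm0]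
      exact hα1.trans (by exact_mod_cast Nat.one_le_iff_ne_zero.mpr (by omega))
  have hsub : {ω | (m : ℝ) * orderStat pv u ω ≤ α} ⊆ ⋃ k ∈ S, {ω | pv k ω ≤ α / m} := by
    intro ω hω
    obtain ⟨k, hk, hkle⟩ := exists_le_orderStat hu1 huK pv S hScard ω
    simp only [Set.mem_iUnion, Set.mem_setOf_eq]
    refine ⟨k, hk, hkle.trans ?_⟩
    rw [le_div_iff₀ hm0]
    rw [mul_comm]
    exact hω
  calc μ {ω | (m : ℝ) * orderStat pv u ω ≤ α}
      ≤ μ (⋃ k ∈ S, {ω | pv k ω ≤ α / m}) := measure_mono hsub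
    _ ≤ ∑ k ∈ S, μ {ω | pv k ω ≤ α / m} := measure_biUnion_finset_le S _
    _ ≤ ∑ k ∈ S, ENNReal.ofReal (α / m) := by
        apply Finset.sum_le_sum
        intro k hk
        exact hsup k (hST hk) _ hβ
    _ = m * ENNReal.ofReal (α / m) := by
        rw [Finset.sum_const, hScard]
        simp [nsmul_eq_mul]
    _ = ENNReal.ofReal α := by
        rw [show ((m:ℕ):ENNReal) = ENNReal.ofReal (m:ℝ) by simp,
          ← ENNReal.ofReal_mul (by positivity)]
        congr 1
        field_simp
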